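/- Let Ψ : ℝ → ℝ be the bump function Ψ(s) = exp(1 + 1/(s²−1)) for |s| < 1 and Ψ(s) = 0 for |s| ≥ 1, and define u_L : ℝ × ℝ → ℝ by u_L(x,t) = Ψ(5(x−t)−1) − (1/3)Ψ(5(x+t)−4) − (1/3)Ψ(5(x−t)+4) − (8/9)Ψ(5(x+t)−13/2). Then u_L satisfies the wave equation with unit speed, ∂ₜₜu_L(x,t) = ∂ₓₓu_L(x,t), for all (x,t) ∈ ℝ²; moreover for every x ∈ [0,1/2] one has u_L(x,0) = Ψ(5x−1) and ∂ₜu_L(x,0) = −5Ψ′(5x−1). -/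

import Mathlib

/-- The bump function `Ψ(s) = exp(1 + 1/(s²−1))` on `(−1,1)`, extended by zero. -/
noncomputable def Psi (s : ℝ) : ℝ :=
  if |s| < 1 then Real.exp (1 + 1 / (s ^ 2 - 1)) else 0

lemma Psi_eq : Psi = fun s => Real.exp 1 * expNegInvGlue (1 - s ^ 2) := by
  funext s
  unfold Psi expNegInvGlue
  rcases lt_or_ge |s| 1 with h | h
  · have hs : s ^ 2 < 1 := by
      have := abs_lt.mp h; nlinarith
    rw [if_pos h, if_neg (by linarith : ¬ (1 - s ^ 2 ≤ 0)), ← Real.exp_add]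
    congr 1
    rw [show s ^ 2 - 1 = -(1 - s ^ 2) by ring, one_div, inv_neg]
  · have hs : 1 ≤ s ^ 2 := by have := sq_abs s; nlinarith
    rw [if_neg (not_lt.2 h), if_pos (by linarith), mul_zero]

lemma Psi_contDiff : ContDiff ℝ (⊤ : ℕ∞) Psi := by
  rw [Psi_eq]
  have h : ContDiff ℝ (⊤ : ℕ∞) (fun s : ℝ => 1 - s ^ 2) :=
    contDiff_const.sub (contDiff_id.pow 2)
  exact contDiff_const.mul (expNegInvGlue.contDiff.comp h)

lemma Psi_diff : Differentiable ℝ Psi := Psi_contDiff.differentiable (by simp)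

lemma derivPsi_diff : Differentiable ℝ (deriv Psi) := by
  have h := (Psi_contDiff.iterate_deriv 1).differentiable (by simp)
  simpa using h

lemma Psi_zero {s : ℝ} (hs : 1 ≤ |s|) : Psi s = 0 := by
  simp [Psi, not_lt.2 hs]

lemma derivPsi_zero {s : ℝ} (hs : 1 < |s|) : deriv Psi s = 0 := by
  have hev : Psi =ᶠ[nhds s] (fun _ => (0 : ℝ)) := by
    have hmem : {y : ℝ | 1 < |y|} ∈ nhds s :=
      (isOpen_lt continuous_const continuous_abs).mem_nhds hs
    filter_upwards [hmem] with y hy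
    exact Psi_zero (le_of_lt hy)
  rw [hev.deriv_eq, deriv_const]

/-- Derivative of `g` composed with an affine function. -/
lemma hasDerivAt_comp_affine {g : ℝ → ℝ} (hg : Differentiable ℝ g) (a b t : ℝ)
    (φ : ℝ → ℝ) (hφ : ∀ s, φ s = a * s + b) :
    HasDerivAt (fun s => g (φ s)) (a * deriv g (φ t)) t := by
  have h1 : HasDerivAt φ a t := by
    have : φ = fun s => a * s + b := funext hφ
    rw [this]
    simpa using ((hasDerivAt_id t).const_mul a).add_const b
  have h2 := (hg (φ t)).hasDerivAt.comp t h1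
  rw [mul_comm] at h2
  exact h2

/-- Left part of the exact solution of the transmission problem with piecewise-constant
velocity: `u_L` solves the unit-speed wave equation on ℝ², and on `[0,1/2]` it has initial
data `u_L(x,0) = Ψ(5x−1)` and `∂ₜu_L(x,0) = −5Ψ′(5x−1)`. -/
theorem transmission_left_solution (uL : ℝ → ℝ → ℝ)
    (huL : ∀ x t, uL x t =
      Psi (5 * (x - t) - 1) - (1 / 3) * Psi (5 * (x + t) - 4)
        - (1 / 3) * Psi (5 * (x - t) + 4) - (8 / 9) * Psi (5 * (x + t) - 13 / 2)) :
    (∀ x t : ℝ, deriv (deriv (fun s => uL x s)) t = deriv (deriv (fun y => uL y t)) x) ∧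
    (∀ x ∈ Set.Icc (0 : ℝ) (1 / 2),
      uL x 0 = Psi (5 * x - 1) ∧
      deriv (fun s => uL x s) 0 = -5 * deriv Psi (5 * x - 1)) := by
  -- first time derivative of uL x ·
  have hT1 : ∀ x t : ℝ, HasDerivAt (fun s => uL x s)
      ((-5) * deriv Psi (5 * (x - t) - 1)
        - (1/3) * (5 * deriv Psi (5 * (x + t) - 4))
        - (1/3) * ((-5) * deriv Psi (5 * (x - t) + 4))
        - (8/9) * (5 * deriv Psi (5 * (x + t) - 13/2))) t := by
    intro x t
    have e : (fun s => uL x s) = (fun s =>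
        Psi (5 * (x - s) - 1) - (1 / 3) * Psi (5 * (x + s) - 4)
          - (1 / 3) * Psi (5 * (x - s) + 4) - (8 / 9) * Psi (5 * (x + s) - 13 / 2)) := by
      funext s; exact huL x s
    rw [e]
    have h1 := hasDerivAt_comp_affine Psi_diff (-5) (5 * x - 1) t
      (fun s => 5 * (x - s) - 1) (fun s => by ring)
    have h2 := hasDerivAt_comp_affine Psi_diff 5 (5 * x - 4) t
      (fun s => 5 * (x + s) - 4) (fun s => by ring)
    have h3 := hasDerivAt_comp_affine Psi_diff (-5) (5 * x + 4) t
      (fun s => 5 * (x - s) + 4) (fun s => by ring)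
    have h4 := hasDerivAt_comp_affine Psi_diff 5 (5 * x - 13/2) t
      (fun s => 5 * (x + s) - 13/2) (fun s => by ring)
    exact ((h1.sub (h2.const_mul (1/3))).sub (h3.const_mul (1/3))).sub (h4.const_mul (8/9))
  have hT1' : ∀ x : ℝ, deriv (fun s => uL x s) = fun t =>
      (-5) * deriv Psi (5 * (x - t) - 1)
        - (1/3) * (5 * deriv Psi (5 * (x + t) - 4))
        - (1/3) * ((-5) * deriv Psi (5 * (x - t) + 4))
        - (8/9) * (5 * deriv Psi (5 * (x + t) - 13/2)) := by
    intro x; funext t; exact (hT1 x t).deriv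
  constructor
  · intro x t
    -- second time derivative
    have hT2 : HasDerivAt (deriv (fun s => uL x s))
        ((-5) * ((-5) * deriv (deriv Psi) (5 * (x - t) - 1))
          - (1/3) * (5 * (5 * deriv (deriv Psi) (5 * (x + t) - 4)))
          - (1/3) * ((-5) * ((-5) * deriv (deriv Psi) (5 * (x - t) + 4)))
          - (8/9) * (5 * (5 * deriv (deriv Psi) (5 * (x + t) - 13/2)))) t := by
      rw [hT1' x]
      have h1 := hasDerivAt_comp_affine derivPsi_diff (-5) (5 * x - 1) t
        (fun s => 5 * (x - s) - 1) (fun s => by ring)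
      have h2 := hasDerivAt_comp_affine derivPsi_diff 5 (5 * x - 4) t
        (fun s => 5 * (x + s) - 4) (fun s => by ring)
      have h3 := hasDerivAt_comp_affine derivPsi_diff (-5) (5 * x + 4) t
        (fun s => 5 * (x - s) + 4) (fun s => by ring)
      have h4 := hasDerivAt_comp_affine derivPsi_diff 5 (5 * x - 13/2) t
        (fun s => 5 * (x + s) - 13/2) (fun s => by ring)
      exact (((h1.const_mul (-5)).sub ((h2.const_mul 5).const_mul (1/3))).sub
        ((h3.const_mul (-5)).const_mul (1/3))).sub ((h4.const_mul 5).const_mul (8/9))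
    -- first space derivative
    have hX1 : ∀ y : ℝ, HasDerivAt (fun y => uL y t)
        (5 * deriv Psi (5 * (y - t) - 1)
          - (1/3) * (5 * deriv Psi (5 * (y + t) - 4))
          - (1/3) * (5 * deriv Psi (5 * (y - t) + 4))
          - (8/9) * (5 * deriv Psi (5 * (y + t) - 13/2))) y := by
      intro y
      have e : (fun y => uL y t) = (fun y =>
          Psi (5 * (y - t) - 1) - (1 / 3) * Psi (5 * (y + t) - 4)
            - (1 / 3) * Psi (5 * (y - t) + 4) - (8 / 9) * Psi (5 * (y + t) - 13 / 2)) := by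
        funext y; exact huL y t
      rw [e]
      have h1 := hasDerivAt_comp_affine Psi_diff 5 (-(5 * t) - 1) y
        (fun y => 5 * (y - t) - 1) (fun y => by ring)
      have h2 := hasDerivAt_comp_affine Psi_diff 5 (5 * t - 4) y
        (fun y => 5 * (y + t) - 4) (fun y => by ring)
      have h3 := hasDerivAt_comp_affine Psi_diff 5 (-(5 * t) + 4) y
        (fun y => 5 * (y - t) + 4) (fun y => by ring)
      have h4 := hasDerivAt_comp_affine Psi_diff 5 (5 * t - 13/2) y
        (fun y => 5 * (y + t) - 13/2) (fun y => by ring)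
      exact ((h1.sub (h2.const_mul (1/3))).sub (h3.const_mul (1/3))).sub (h4.const_mul (8/9))
    have hX1' : deriv (fun y => uL y t) = fun y =>
        5 * deriv Psi (5 * (y - t) - 1)
          - (1/3) * (5 * deriv Psi (5 * (y + t) - 4))
          - (1/3) * (5 * deriv Psi (5 * (y - t) + 4))
          - (8/9) * (5 * deriv Psi (5 * (y + t) - 13/2)) := by
      funext y; exact (hX1 y).deriv
    have hX2 : HasDerivAt (deriv (fun y => uL y t))
        (5 * (5 * deriv (deriv Psi) (5 * (x - t) - 1))
          - (1/3) * (5 * (5 * deriv (deriv Psi) (5 * (x + t) - 4)))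
          - (1/3) * (5 * (5 * deriv (deriv Psi) (5 * (x - t) + 4)))
          - (8/9) * (5 * (5 * deriv (deriv Psi) (5 * (x + t) - 13/2)))) x := by
      rw [hX1']
      have h1 := hasDerivAt_comp_affine derivPsi_diff 5 (-(5 * t) - 1) x
        (fun y => 5 * (y - t) - 1) (fun y => by ring)
      have h2 := hasDerivAt_comp_affine derivPsi_diff 5 (5 * t - 4) x
        (fun y => 5 * (y + t) - 4) (fun y => by ring)
      have h3 := hasDerivAt_comp_affine derivPsi_diff 5 (-(5 * t) + 4) x
        (fun y => 5 * (y - t) + 4) (fun y => by ring)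
      have h4 := hasDerivAt_comp_affine derivPsi_diff 5 (5 * t - 13/2) x
        (fun y => 5 * (y + t) - 13/2) (fun y => by ring)
      exact (((h1.const_mul 5).sub ((h2.const_mul 5).const_mul (1/3))).sub
        ((h3.const_mul 5).const_mul (1/3))).sub ((h4.const_mul 5).const_mul (8/9))
    rw [hT2.deriv, hX2.deriv]
    ring
  · intro x hx
    obtain ⟨hx0, hx1⟩ := hx
    have a2 : (1:ℝ) < |5 * (x + 0) - 4| := by
      rw [abs_of_nonpos (by linarith)]; linarith
    have a3 : (1:ℝ) < |5 * (x - 0) + 4| := by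
      rw [abs_of_nonneg (by linarith)]; linarith
    have a4 : (1:ℝ) < |5 * (x + 0) - 13 / 2| := by
      rw [abs_of_nonpos (by linarith)]; linarith
    have e1 : (5:ℝ) * (x - 0) - 1 = 5 * x - 1 := by ring
    constructor
    · rw [huL, e1, Psi_zero a2.le, Psi_zero a3.le, Psi_zero a4.le]; ring
    · rw [hT1' x]
      show (-5) * deriv Psi (5 * (x - 0) - 1)
          - (1/3) * (5 * deriv Psi (5 * (x + 0) - 4))
          - (1/3) * ((-5) * deriv Psi (5 * (x - 0) + 4))
          - (8/9) * (5 * deriv Psi (5 * (x + 0) - 13/2)) = -5 * deriv Psi (5 * x - 1)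
      rw [e1, derivPsi_zero a2, derivPsi_zero a3, derivPsi_zero a4]
      ring
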